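/- For every k ≥ 2 and every shift c ∈ {0,1}^{2^k − 1}, the shifted function x ↦ f_k(x ⊕ c) satisfies alt(x ↦ f_k(x ⊕ c)) ≥ 2^{k−2}. -/

import Mathlib

open scoped Classical

/-- Pointwise XOR of Boolean vectors. -/
def bxor {n : ℕ} (x y : Fin n → Bool) : Fin n → Bool := fun i => Bool.xor (x i) (y i)

/-- Indicator vector of a set of coordinates. -/
def eB {n : ℕ} (B : Finset (Fin n)) : Fin n → Bool := fun i => decide (i ∈ B)

/-- Standard basis vector. -/
def eI {n : ℕ} (i : Fin n) : Fin n → Bool := fun j => decide (j = i)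

/-- Sensitivity of `f` at `a`. -/
def sensAt {n : ℕ} (f : (Fin n → Bool) → Bool) (a : Fin n → Bool) : ℕ :=
  (Finset.univ.filter fun i : Fin n => f (bxor a (eI i)) ≠ f a).card

/-- Sensitivity of `f`. -/
def sens {n : ℕ} (f : (Fin n → Bool) → Bool) : ℕ :=
  Finset.univ.sup fun a : Fin n → Bool => sensAt f a

/-- Block sensitivity of `f` at `a`: the largest number of pairwise disjoint nonempty
sensitive blocks. -/
def bsAt {n : ℕ} (f : (Fin n → Bool) → Bool) (a : Fin n → Bool) : ℕ :=
  Finset.univ.sup fun S : Finset (Finset (Fin n)) =>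
    if (∀ B ∈ S, B.Nonempty ∧ f (bxor a (eB B)) ≠ f a) ∧
       (∀ B ∈ S, ∀ C ∈ S, B ≠ C → Disjoint B C)
    then S.card else 0

/-- Block sensitivity of `f`. -/
def bs {n : ℕ} (f : (Fin n → Bool) → Bool) : ℕ :=
  Finset.univ.sup fun a : Fin n → Bool => bsAt f a

/-- `x` is a monotone chain `0^n = x^0 ≺ x^1 ≺ ⋯ ≺ x^n = 1^n` in the Boolean cube
(each step strictly increases, hence flips exactly one coordinate from 0 to 1). -/
def IsChainOn {n : ℕ} (x : Fin (n + 1) → Fin n → Bool) : Prop :=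
  x 0 = (fun _ => false) ∧ x (Fin.last n) = (fun _ => true) ∧
    ∀ i : Fin n, (∀ j, x i.castSucc j ≤ x i.succ j) ∧ x i.castSucc ≠ x i.succ

/-- Alternation of `f` along a chain `x`. -/
def altChain {n : ℕ} (f : (Fin n → Bool) → Bool) (x : Fin (n + 1) → Fin n → Bool) : ℕ :=
  (Finset.univ.filter fun i : Fin n => f (x i.succ) ≠ f (x i.castSucc)).card

/-- Alternation of `f`: maximal alternation along a chain. -/
noncomputable def altF {n : ℕ} (f : (Fin n → Bool) → Bool) : ℕ :=
  Finset.univ.sup fun x : Fin (n + 1) → Fin n → Bool =>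
    if IsChainOn x then altChain f x else 0

/-- Shift-invariant alternation: minimum alternation over all shifts of `f`. -/
noncomputable def saltF {n : ℕ} (f : (Fin n → Bool) → Bool) : ℕ :=
  (Finset.univ : Finset (Fin n → Bool)).inf' Finset.univ_nonempty
    fun b => altF fun x => f (bxor x b)
/-- The recursively defined decision-tree function family: `fTree 1 = id` on one bit, and
`fTree (k+1) (b, z, z') = fTree k z` if `b = 0`, `fTree k z'` if `b = 1`
(layout: bit 0 is `b`, bits `1..2^k-1` are `z`, bits `2^k..2^(k+1)-2` are `z'`). -/
def fTree : (k : ℕ) → (Fin (2 ^ k - 1) → Bool) → Bool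
  | 0, _ => false
  | 1, x => x ⟨0, by norm_num⟩
  | (k + 2), x =>
    if x ⟨0, by have h : (1:ℕ) < 2 ^ (k + 2) := Nat.one_lt_two_pow_iff.mpr (by omega); omega⟩ then
      fTree (k + 1) (fun j => x ⟨j.1 + 2 ^ (k + 1), by
        have hj := j.isLt
        have h1 : 0 < 2 ^ (k + 1) := by positivity
        have h2 : 2 ^ (k + 2) = 2 ^ (k + 1) * 2 := pow_succ 2 (k + 1)
        omega⟩)
    else
      fTree (k + 1) (fun j => x ⟨j.1 + 1, by
        have hj := j.isLt
        have h1 : 0 < 2 ^ (k + 1) := by positivity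
        have h2 : 2 ^ (k + 2) = 2 ^ (k + 1) * 2 := pow_succ 2 (k + 1)
        omega⟩)

/-- for every `k ≥ 2` and every shift `c ∈ {0,1}^{2^k - 1}`, the shifted
function `x ↦ f_k(x ⊕ c)` has alternation at least `2^(k-2)`. -/
def chainOf {n : ℕ} (π : Fin n → Fin n) : Fin (n+1) → Fin n → Bool :=
  fun t j => decide (∃ s : Fin n, (s:ℕ) < (t:ℕ) ∧ π s = j)
def embF (n m : ℕ) (h : n = 2*m+1) (b : Bool) (j : Fin m) : Fin n :=
  if b then ⟨j.1+m+1, by have := j.isLt; omega⟩ else ⟨j.1+1, by have := j.isLt; omega⟩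
lemma embF_pos (n m : ℕ) (h : n = 2*m+1) (b : Bool) (j : Fin m) :
    (embF n m h b j).1 ≠ 0 := by
  cases b <;> simp [embF]
lemma embF_inj (n m : ℕ) (h : n = 2*m+1) (b : Bool) {j j' : Fin m}
    (hjj : embF n m h b j = embF n m h b j') : j = j' := by
  have := congrArg Fin.val hjj
  cases b <;> simp [embF] at this <;> exact Fin.ext this
lemma embF_ne (n m : ℕ) (h : n = 2*m+1) {b b' : Bool} (hb : b ≠ b') (j j' : Fin m) :
    embF n m h b j ≠ embF n m h b' j' := by
  intro hcon
  have := congrArg Fin.val hcon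
  have hjm := j.isLt; have hjm' := j'.isLt
  cases b <;> cases b' <;> simp [embF] at this hb <;> omega
def glue (n m : ℕ) (h : n = 2*m+1) (b : Bool) (πA πB : Fin m → Fin m) : Fin n → Fin n :=
  fun t =>
    if h1 : (t:ℕ) < m then embF n m h b (πA ⟨t, h1⟩)
    else if h2 : (t:ℕ) = m then ⟨0, by omega⟩
    else embF n m h (!b) (πB ⟨t.1 - m - 1, by have := t.isLt; omega⟩)

lemma glue_inj (n m : ℕ) (h : n = 2*m+1) (b : Bool) {πA πB : Fin m → Fin m}
    (hA : Function.Injective πA) (hB : Function.Injective πB) :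
    Function.Injective (glue n m h b πA πB) := by
  intro s t hst
  unfold glue at hst
  have hs := s.isLt; have ht := t.isLt
  split_ifs at hst with h1 h2 h3 h4 h5 h6 h7 h8
  · have := hA (embF_inj n m h b hst); apply Fin.ext; simpa [Fin.ext_iff] using this
  · exact absurd (congrArg Fin.val hst) (by simp; exact fun hc => embF_pos n m h b _ hc)
  · exact absurd hst (embF_ne n m h (by cases b <;> simp) _ _)
  · exact absurd (congrArg Fin.val hst) (by simp; exact fun hc => embF_pos n m h b _ hc.symm)
  · omega
  · exact absurd (congrArg Fin.val hst) (by simp; exact fun hc => (embF_pos n m h (!b) _) hc.symm)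
  · exact absurd hst (embF_ne n m h (by cases b <;> simp) _ _)
  · exact absurd (congrArg Fin.val hst) (by simp; exact fun hc => (embF_pos n m h (!b) _) hc)
  · have h9 := hB (embF_inj n m h (!b) hst)
    have := congrArg Fin.val h9
    simp at this
    apply Fin.ext; omega

section coords
variable (n m : ℕ) (h : n = 2*m+1) (b : Bool) (πA πB : Fin m → Fin m)

lemma cl0 (T : Fin (n+1)) (hT : T.1 ≤ m) :
    chainOf (glue n m h b πA πB) T ⟨0, by omega⟩ = false := by
  simp only [chainOf, decide_eq_false_iff_not]
  rintro ⟨s, hs1, hs2⟩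
  have hsm : (s:ℕ) < m := by omega
  rw [glue, dif_pos hsm] at hs2
  exact embF_pos n m h b _ (by rw [hs2])

lemma clA (T : Fin (n+1)) (hT : T.1 ≤ m) (j : Fin m) :
    chainOf (glue n m h b πA πB) T (embF n m h b j)
      = chainOf πA ⟨T.1, by omega⟩ j := by
  simp only [chainOf, decide_eq_decide]
  constructor
  · rintro ⟨s, hs1, hs2⟩
    have hsm : (s:ℕ) < m := by omega
    rw [glue, dif_pos hsm] at hs2
    exact ⟨⟨s, hsm⟩, hs1, embF_inj n m h b hs2⟩
  · rintro ⟨s, hs1, hs2⟩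
    refine ⟨⟨s.1, by omega⟩, hs1, ?_⟩
    rw [glue, dif_pos (show (s:ℕ) < m from s.isLt)]
    exact congrArg _ (by rw [← hs2])

lemma clB (T : Fin (n+1)) (hT : T.1 ≤ m) (j : Fin m) :
    chainOf (glue n m h b πA πB) T (embF n m h (!b) j) = false := by
  simp only [chainOf, decide_eq_false_iff_not]
  rintro ⟨s, hs1, hs2⟩
  have hsm : (s:ℕ) < m := by omega
  rw [glue, dif_pos hsm] at hs2
  exact embF_ne n m h (by cases b <;> simp) _ _ hs2

lemma ch0 (T : Fin (n+1)) (hT : m+1 ≤ T.1) :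
    chainOf (glue n m h b πA πB) T ⟨0, by omega⟩ = true := by
  simp only [chainOf, decide_eq_true_eq]
  refine ⟨⟨m, by omega⟩, by simp; omega, ?_⟩
  rw [glue, dif_neg (by simp), dif_pos rfl]

lemma chA (hA : Function.Injective πA) (T : Fin (n+1)) (hT : m+1 ≤ T.1) (j : Fin m) :
    chainOf (glue n m h b πA πB) T (embF n m h b j) = true := by
  obtain ⟨s, hs⟩ := Finite.surjective_of_injective hA j
  simp only [chainOf, decide_eq_true_eq]
  refine ⟨⟨s.1, by omega⟩, by simp; omega, ?_⟩
  rw [glue, dif_pos (show (s.1:ℕ) < m from s.isLt)]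
  exact congrArg _ (by rw [← hs])

lemma chB (T : Fin (n+1)) (hT : m+1 ≤ T.1) (j : Fin m) :
    chainOf (glue n m h b πA πB) T (embF n m h (!b) j)
      = chainOf πB ⟨T.1 - m - 1, by have := T.isLt; omega⟩ j := by
  simp only [chainOf, decide_eq_decide]
  constructor
  · rintro ⟨s, hs1, hs2⟩
    rw [glue] at hs2
    split_ifs at hs2 with h1 h2
    · exact absurd hs2 (embF_ne n m h (by cases b <;> simp) _ _)
    · exact absurd (congrArg Fin.val hs2).symm (embF_pos n m h (!b) _)
    · exact ⟨⟨s.1 - m - 1, by have := s.isLt; omega⟩, by simp at hs1 ⊢; omega,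
        embF_inj n m h (!b) hs2⟩
  · rintro ⟨s, hs1, hs2⟩
    have hsn := s.isLt
    have hTn := T.isLt
    refine ⟨⟨s.1+m+1, by omega⟩, by simp at hs1 ⊢; omega, ?_⟩
    rw [glue, dif_neg (by simp; omega), dif_neg (by simp; omega)]
    have hfe : πB ⟨((⟨s.1+m+1, by omega⟩ : Fin n) : ℕ) - m - 1, by simp; omega⟩ = j := by
      rw [show (⟨((⟨s.1+m+1, by omega⟩ : Fin n) : ℕ) - m - 1,
        by simp; omega⟩ : Fin m) = s from Fin.ext (by simp; omega)]
      exact hs2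
    exact congrArg _ (by rw [← hfe])
end coords

lemma fTree_succ (k : ℕ) (x : Fin (2^(k+2)-1) → Bool) :
    fTree (k+2) x =
      if x ⟨0, by have h : (1:ℕ) < 2 ^ (k + 2) := Nat.one_lt_two_pow_iff.mpr (by omega); omega⟩ then
        fTree (k + 1) (fun j => x ⟨j.1 + 2 ^ (k + 1), by
          have hj := j.isLt
          have h1 : 0 < 2 ^ (k + 1) := Nat.pow_pos (by omega)
          have h2 : 2 ^ (k + 2) = 2 ^ (k + 1) * 2 := pow_succ 2 (k + 1)
          omega⟩)
      else
        fTree (k + 1) (fun j => x ⟨j.1 + 1, by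
          have hj := j.isLt
          have h1 : 0 < 2 ^ (k + 1) := Nat.pow_pos (by omega)
          have h2 : 2 ^ (k + 2) = 2 ^ (k + 1) * 2 := pow_succ 2 (k + 1)
          omega⟩) := by
  rw [fTree]

lemma pow_eq (k : ℕ) : (2:ℕ)^(k+1+1) = 2^(k+2) := rfl

lemma branch (k : ℕ) (y : Fin (2^(k+1+2)-1) → Bool) (bb : Bool)
    (h : 2^(k+1+2)-1 = 2*(2^(k+2)-1)+1)
    (hy : y ⟨0, by omega⟩ = bb) :
    fTree (k+1+2) y
      = fTree (k+2) (fun j => y (embF (2^(k+1+2)-1) (2^(k+2)-1) h bb j)) := by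
  have h2 : 0 < (2:ℕ)^(k+2) := Nat.pow_pos (by omega)
  rw [fTree_succ (k+1) y]
  have hy' : y ⟨0, by
      have hh : (1:ℕ) < 2 ^ (k+1+2) := Nat.one_lt_two_pow_iff.mpr (by omega); omega⟩ = bb := hy
  rw [hy']
  cases bb
  · rw [if_neg (by simp)]
    refine congrArg _ (funext fun j => congrArg y (Fin.ext ?_))
    simp [embF]
  · rw [if_pos rfl]
    refine congrArg _ (funext fun j => congrArg y (Fin.ext ?_))
    have := pow_eq k
    simp [embF]
    omega


lemma isChainOn_chainOf {n : ℕ} {π : Fin n → Fin n} (hπ : Function.Injective π) :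
    IsChainOn (chainOf π) := by
  have hsurj : Function.Surjective π := Finite.surjective_of_injective hπ
  refine ⟨?_, ?_, ?_⟩
  · funext j; simp [chainOf]
  · funext j
    obtain ⟨s, hs⟩ := hsurj j
    simp only [chainOf, Fin.val_last, decide_eq_true_eq]
    exact ⟨s, s.isLt, hs⟩
  · intro i
    constructor
    · intro j
      simp only [chainOf, Fin.coe_castSucc, Fin.val_succ]
      by_cases h : ∃ s : Fin n, (s:ℕ) < (i:ℕ) ∧ π s = j
      · obtain ⟨s, hs1, hs2⟩ := h
        rw [decide_eq_true (⟨s, by omega, hs2⟩ : ∃ s : Fin n, (s:ℕ) < (i:ℕ)+1 ∧ π s = j)]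
        exact le_top
      · rw [decide_eq_false h]; exact bot_le
    · intro h
      have h2 := congrFun h (π i)
      simp only [chainOf, Fin.coe_castSucc, Fin.val_succ] at h2
      have hl : ¬ (∃ s : Fin n, (s:ℕ) < (i:ℕ) ∧ π s = π i) := by
        rintro ⟨s, hs1, hs2⟩
        have := hπ hs2
        rw [this] at hs1; omega
      have hr : (∃ s : Fin n, (s:ℕ) < (i:ℕ)+1 ∧ π s = π i) := ⟨i, by omega, rfl⟩
      rw [decide_eq_false hl, decide_eq_true hr] at h2
      exact Bool.false_ne_true h2


def basePerm : Fin (2^(0+2)-1) → Fin (2^(0+2)-1) :=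
  fun s => ⟨(s.1+1) % 3, Nat.mod_lt _ (by norm_num)⟩

lemma base (c : Fin (2^(0+2)-1) → Bool) :
    ∃ π : Fin (2^(0+2)-1) → Fin (2^(0+2)-1), Function.Injective π ∧
      2^0 ≤ altChain (fun x => fTree (0+2) (bxor x c)) (chainOf π) := by
  refine ⟨basePerm, ?_, ?_⟩
  · intro s t hst
    have hs : s.1 < 3 := s.isLt
    have ht : t.1 < 3 := t.isLt
    have := congrArg Fin.val hst
    simp only [basePerm] at this
    exact Fin.ext (by omega)
  · set i0 : Fin (2^(0+2)-1) := ⟨0, by norm_num⟩ with hi0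
    set i1 : Fin (2^(0+2)-1) := ⟨1, by norm_num⟩ with hi1
    set i2 : Fin (2^(0+2)-1) := ⟨2, by norm_num⟩ with hi2
    have gval : ∀ x : Fin (2^(0+2)-1) → Bool,
        fTree (0+2) (bxor x c) =
          if Bool.xor (x i0) (c i0) then Bool.xor (x i2) (c i2)
          else Bool.xor (x i1) (c i1) := by
      intro x
      rfl
    have v00 : ∀ j, chainOf basePerm 0 j = false := by decide
    have v10 : chainOf basePerm 1 i0 = false := by decide
    have v11 : chainOf basePerm 1 i1 = true := by decide
    have v12 : chainOf basePerm 1 i2 = false := by decide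
    have v20 : chainOf basePerm 2 i0 = false := by decide
    have v21 : chainOf basePerm 2 i1 = true := by decide
    have v22 : chainOf basePerm 2 i2 = true := by decide
    rw [altChain, Nat.pow_zero, Nat.one_le_iff_ne_zero, ← Nat.pos_iff_ne_zero,
      Finset.card_pos]
    rcases hb : c i0 with _ | _
    · refine ⟨i0, Finset.mem_filter.mpr ⟨Finset.mem_univ _, ?_⟩⟩
      have e1 : (Fin.succ i0 : Fin (2^(0+2)-1+1)) = 1 := rfl
      have e2 : (Fin.castSucc i0 : Fin (2^(0+2)-1+1)) = 0 := rfl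
      rw [e1, e2, gval, gval, v10, v11, hb]
      simp [v00]
    · refine ⟨i1, Finset.mem_filter.mpr ⟨Finset.mem_univ _, ?_⟩⟩
      have e1 : (Fin.succ i1 : Fin (2^(0+2)-1+1)) = 2 := rfl
      have e2 : (Fin.castSucc i1 : Fin (2^(0+2)-1+1)) = 1 := rfl
      rw [e1, e2, gval, gval, v20, v22, v10, v12, hb]
      cases c i2 <;> simp
def loE (n m : ℕ) (h : n = 2*m+1) (i : Fin m) : Fin n := ⟨i.1, by have := i.isLt; omega⟩
def hiE (n m : ℕ) (h : n = 2*m+1) (i : Fin m) : Fin n := ⟨i.1+m+1, by have := i.isLt; omega⟩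

lemma loE_inj (n m : ℕ) (h : n = 2*m+1) : Function.Injective (loE n m h) := by
  intro i j hij
  have := congrArg Fin.val hij
  simp [loE] at this
  exact Fin.ext this

lemma hiE_inj (n m : ℕ) (h : n = 2*m+1) : Function.Injective (hiE n m h) := by
  intro i j hij
  have := congrArg Fin.val hij
  simp [hiE] at this
  exact Fin.ext this

lemma key : ∀ k : ℕ, ∀ c : Fin (2^(k+2)-1) → Bool,
    ∃ π : Fin (2^(k+2)-1) → Fin (2^(k+2)-1), Function.Injective π ∧
      2^k ≤ altChain (fun x => fTree (k+2) (bxor x c)) (chainOf π) := by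
  intro k
  induction k with
  | zero => exact base
  | succ k ih =>
    intro c
    have hpow : (2:ℕ)^(k+1+2) = 2 * 2^(k+2) := by ring
    have hpos : 0 < (2:ℕ)^(k+2) := Nat.pow_pos (by omega)
    have h : 2^(k+1+2)-1 = 2*(2^(k+2)-1)+1 := by omega
    have h0 : 0 < 2^(k+1+2)-1 := by omega
    set b : Bool := c ⟨0, h0⟩ with hb
    set cA : Fin (2^(k+2)-1) → Bool := fun j => c (embF _ _ h b j) with hcA
    set cB : Fin (2^(k+2)-1) → Bool := fun j => c (embF _ _ h (!b) j) with hcB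
    obtain ⟨πA, hAinj, hAbd⟩ := ih cA
    obtain ⟨πB, hBinj, hBbd⟩ := ih cB
    refine ⟨glue _ _ h b πA πB, glue_inj _ _ h b hAinj hBinj, ?_⟩
    have hle : 2^(k+2)-1+1 ≤ 2^(k+1+2)-1+1 := by omega
    -- value of the big function on the low part of the chain
    have glow : ∀ t : Fin (2^(k+2)-1+1),
        fTree (k+1+2) (bxor (chainOf (glue _ _ h b πA πB) (Fin.castLE hle t)) c)
          = fTree (k+2) (bxor (chainOf πA t) cA) := by
      intro t
      have hts := t.isLt
      have hT : ((Fin.castLE hle t : Fin (2^(k+1+2)-1+1)) : ℕ) ≤ 2^(k+2)-1 := by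
        simp; omega
      have hbit : bxor (chainOf (glue _ _ h b πA πB) (Fin.castLE hle t)) c ⟨0, by omega⟩
          = b := by
        show Bool.xor _ _ = b
        rw [cl0 _ _ h b πA πB _ hT, Bool.false_xor]
      rw [branch k _ b h hbit]
      refine congrArg _ (funext fun j => ?_)
      show Bool.xor _ _ = Bool.xor _ _
      rw [clA _ _ h b πA πB _ hT j]
      have e1 : (⟨((Fin.castLE hle t : Fin (2^(k+1+2)-1+1)) : ℕ), by omega⟩
          : Fin (2^(k+2)-1+1)) = t := Fin.ext (by simp)
      rw [e1]
    -- value of the big function on the high part of the chain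
    have ghigh : ∀ t : Fin (2^(k+2)-1+1),
        fTree (k+1+2) (bxor (chainOf (glue _ _ h b πA πB)
            ⟨t.1 + (2^(k+2)-1) + 1, by have := t.isLt; omega⟩) c)
          = fTree (k+2) (bxor (chainOf πB t) cB) := by
      intro t
      have hts := t.isLt
      have hT : (2^(k+2)-1)+1 ≤ ((⟨t.1 + (2^(k+2)-1) + 1, by omega⟩
          : Fin (2^(k+1+2)-1+1)) : ℕ) := by simp
      have hbit : bxor (chainOf (glue _ _ h b πA πB)
          ⟨t.1 + (2^(k+2)-1) + 1, by omega⟩) c ⟨0, by omega⟩ = !b := by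
        show Bool.xor _ _ = !b
        rw [ch0 _ _ h b πA πB _ hT, Bool.true_xor]
      rw [branch k _ (!b) h hbit]
      refine congrArg _ (funext fun j => ?_)
      show Bool.xor _ _ = Bool.xor _ _
      rw [chB _ _ h b πA πB _ hT j]
      have e1 : (⟨((⟨t.1 + (2^(k+2)-1) + 1, by omega⟩ : Fin (2^(k+1+2)-1+1)) : ℕ)
          - (2^(k+2)-1) - 1, by simp; omega⟩ : Fin (2^(k+2)-1+1)) = t :=
        Fin.ext (by simp; omega)
      rw [e1]
    -- counting
    have hAbd' : 2^k ≤ (Finset.univ.filter fun i : Fin (2^(k+2)-1) =>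
        fTree (k+2) (bxor (chainOf πA i.succ) cA)
          ≠ fTree (k+2) (bxor (chainOf πA i.castSucc) cA)).card := hAbd
    have hBbd' : 2^k ≤ (Finset.univ.filter fun i : Fin (2^(k+2)-1) =>
        fTree (k+2) (bxor (chainOf πB i.succ) cB)
          ≠ fTree (k+2) (bxor (chainOf πB i.castSucc) cB)).card := hBbd
    set FA := Finset.univ.filter fun i : Fin (2^(k+2)-1) =>
        fTree (k+2) (bxor (chainOf πA i.succ) cA)
          ≠ fTree (k+2) (bxor (chainOf πA i.castSucc) cA) with hFA
    set FB := Finset.univ.filter fun i : Fin (2^(k+2)-1) =>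
        fTree (k+2) (bxor (chainOf πB i.succ) cB)
          ≠ fTree (k+2) (bxor (chainOf πB i.castSucc) cB) with hFB
    set F := Finset.univ.filter fun i : Fin (2^(k+1+2)-1) =>
        fTree (k+1+2) (bxor (chainOf (glue _ _ h b πA πB) i.succ) c)
          ≠ fTree (k+1+2) (bxor (chainOf (glue _ _ h b πA πB) i.castSucc) c) with hF
    have memLo : ∀ i : Fin (2^(k+2)-1), i ∈ FA → loE _ _ h i ∈ F := by
      intro i hi
      rw [hFA, Finset.mem_filter] at hi
      rw [hF, Finset.mem_filter]
      refine ⟨Finset.mem_univ _, ?_⟩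
      have v1 : fTree (k+1+2) (bxor (chainOf (glue _ _ h b πA πB) (loE _ _ h i).succ) c)
          = fTree (k+2) (bxor (chainOf πA i.succ) cA) := by
        rw [show ((loE _ _ h i).succ : Fin (2^(k+1+2)-1+1)) = Fin.castLE hle i.succ from
          Fin.ext (by simp [loE])]
        exact glow i.succ
      have v2 : fTree (k+1+2) (bxor (chainOf (glue _ _ h b πA πB) (loE _ _ h i).castSucc) c)
          = fTree (k+2) (bxor (chainOf πA i.castSucc) cA) := by
        rw [show ((loE _ _ h i).castSucc : Fin (2^(k+1+2)-1+1)) = Fin.castLE hle i.castSucc from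
          Fin.ext (by simp [loE])]
        exact glow i.castSucc
      rw [v1, v2]
      exact hi.2
    have memHi : ∀ i : Fin (2^(k+2)-1), i ∈ FB → hiE _ _ h i ∈ F := by
      intro i hi
      rw [hFB, Finset.mem_filter] at hi
      rw [hF, Finset.mem_filter]
      refine ⟨Finset.mem_univ _, ?_⟩
      have v1 : fTree (k+1+2) (bxor (chainOf (glue _ _ h b πA πB) (hiE _ _ h i).succ) c)
          = fTree (k+2) (bxor (chainOf πB i.succ) cB) := by
        rw [show ((hiE _ _ h i).succ : Fin (2^(k+1+2)-1+1))
            = ⟨(i.succ).1 + (2^(k+2)-1) + 1, by have := i.isLt; simp; omega⟩ from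
          Fin.ext (by simp [hiE]; omega)]
        exact ghigh i.succ
      have v2 : fTree (k+1+2) (bxor (chainOf (glue _ _ h b πA πB) (hiE _ _ h i).castSucc) c)
          = fTree (k+2) (bxor (chainOf πB i.castSucc) cB) := by
        rw [show ((hiE _ _ h i).castSucc : Fin (2^(k+1+2)-1+1))
            = ⟨(i.castSucc).1 + (2^(k+2)-1) + 1, by have := i.isLt; simp; omega⟩ from
          Fin.ext (by simp [hiE])]
        exact ghigh i.castSucc
      rw [v1, v2]
      exact hi.2
    have hdisj : Disjoint (FA.image (loE _ _ h)) (FB.image (hiE _ _ h)) := by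
      rw [Finset.disjoint_left]
      intro a ha hb'
      obtain ⟨i, _, hi⟩ := Finset.mem_image.mp ha
      obtain ⟨j, _, hj⟩ := Finset.mem_image.mp hb'
      have h1 : a.1 < 2^(k+2)-1 := by rw [← hi]; simpa [loE] using i.isLt
      have h2 : 2^(k+2)-1+1 ≤ a.1 := by rw [← hj]; simp [hiE]
      omega
    have hsub : (FA.image (loE _ _ h)) ∪ (FB.image (hiE _ _ h)) ⊆ F := by
      refine Finset.union_subset ?_ ?_
      · exact Finset.image_subset_iff.mpr fun i hi => memLo i hi
      · exact Finset.image_subset_iff.mpr fun i hi => memHi i hi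
    have hcount : 2^k + 2^k ≤ F.card := by
      calc 2^k + 2^k ≤ FA.card + FB.card := add_le_add hAbd' hBbd'
        _ = (FA.image (loE _ _ h)).card + (FB.image (hiE _ _ h)).card := by
            rw [Finset.card_image_of_injective _ (loE_inj _ _ h),
              Finset.card_image_of_injective _ (hiE_inj _ _ h)]
        _ = ((FA.image (loE _ _ h)) ∪ (FB.image (hiE _ _ h))).card :=
            (Finset.card_union_of_disjoint hdisj).symm
        _ ≤ F.card := Finset.card_le_card hsub
    calc (2:ℕ)^(k+1) = 2^k + 2^k := by ring
      _ ≤ F.card := hcount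
      _ = altChain (fun x => fTree (k+1+2) (bxor x c)) (chainOf (glue _ _ h b πA πB)) := rfl


theorem stmt5 (k : ℕ) (hk : 2 ≤ k) (c : Fin (2 ^ k - 1) → Bool) :
    2 ^ (k - 2) ≤ altF (fun x => fTree k (bxor x c)) := by
  obtain ⟨k', rfl⟩ : ∃ k', k = k' + 2 := ⟨k - 2, by omega⟩
  obtain ⟨π, hinj, hbd⟩ := key k' c
  have hchain := isChainOn_chainOf hinj
  have hle : altChain (fun x => fTree (k'+2) (bxor x c)) (chainOf π)
      ≤ altF (fun x => fTree (k'+2) (bxor x c)) := by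
    have h1 := Finset.le_sup (f := fun x : Fin (2^(k'+2)-1+1) → Fin (2^(k'+2)-1) → Bool =>
      if IsChainOn x then altChain (fun x => fTree (k'+2) (bxor x c)) x else 0)
      (Finset.mem_univ (chainOf π))
    simp only [if_pos hchain] at h1
    exact le_trans h1 (le_of_eq rfl)
  have hred : k' + 2 - 2 = k' := by omega
  rw [hred]
  exact le_trans hbd hle
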